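/- arXiv:2511.22346 — 3 statements merged into one kernel-verified Lean document; each statement's English description precedes it below -/
import Mathlib

section
/- If a collection of cells P is the disjoint union of subcollections P₁,…,P_s such that no cell of P_i shares a row or column or inner interval with a cell of P_j for i ≠ j, then the switching rook polynomial of P is the product of the switching rook polynomials of the P_i: r̃_P(t) = r̃_{P₁}(t) ⋯ r̃_{P_s}(t). -/
/-- A cell in `ℕ²`, identified by its lower-left corner. -/
abbrev Cell := ℕ × ℕ

/-- Two cells attack along a row of `P`: same `y`-coordinate and every cell
between them belongs to `P` (they lie in a common horizontal cell interval). -/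
def RowAttack (P : Finset Cell) (a b : Cell) : Prop :=
  a.2 = b.2 ∧ ∀ x, min a.1 b.1 ≤ x → x ≤ max a.1 b.1 → (x, a.2) ∈ P

/-- Two cells attack along a column of `P`. -/
def ColAttack (P : Finset Cell) (a b : Cell) : Prop :=
  a.1 = b.1 ∧ ∀ y, min a.2 b.2 ≤ y → y ≤ max a.2 b.2 → (a.1, y) ∈ P

/-- Two distinct cells of `P` carrying attacking rooks. -/
def Attack (P : Finset Cell) (a b : Cell) : Prop :=
  a ≠ b ∧ (RowAttack P a b ∨ ColAttack P a b)

/-- A `k`-rook configuration in `P`: `k` cells of `P`, pairwise non-attacking. -/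
def IsRookConfig (P : Finset Cell) (k : ℕ) (C : Finset Cell) : Prop :=
  C ⊆ P ∧ C.card = k ∧ ∀ a ∈ C, ∀ b ∈ C, ¬ Attack P a b

/-- Two cells are opposite corner cells of an inner rectangle of `P`:
distinct rows and columns, and every cell of the spanned rectangle is in `P`. -/
def InnerRectPair (P : Finset Cell) (a b : Cell) : Prop :=
  a.1 ≠ b.1 ∧ a.2 ≠ b.2 ∧
    ∀ x y, min a.1 b.1 ≤ x → x ≤ max a.1 b.1 → min a.2 b.2 ≤ y →
      y ≤ max a.2 b.2 → (x, y) ∈ P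

/-- A switch: two rooks on opposite corner cells of an inner rectangle of `P`
are replaced by rooks on the other two corner cells. -/
def SwitchStep (P : Finset Cell) (C D : Finset Cell) : Prop :=
  ∃ a ∈ C, ∃ b ∈ C, InnerRectPair P a b ∧
    D = (C \ {a, b}) ∪ {(a.1, b.2), (b.1, a.2)}

/-- Switch-equivalence on `k`-rook configurations of `P`. -/
def switchSetoid (P : Finset Cell) (k : ℕ) :
    Setoid {C : Finset Cell // IsRookConfig P k C} where
  r A B := Relation.EqvGen (SwitchStep P) A.1 B.1
  iseqv :=
    ⟨fun _ => Relation.EqvGen.refl _, fun h => Relation.EqvGen.symm _ _ h,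
      fun h1 h2 => Relation.EqvGen.trans _ _ _ h1 h2⟩

/-- `r_k(P)`: the number of `k`-rook configurations in `P`. -/
noncomputable def rConf (P : Finset Cell) (k : ℕ) : ℕ :=
  Nat.card {C : Finset Cell // IsRookConfig P k C}

/-- `r̃_k(P)`: the number of switch-equivalence classes of `k`-rook configurations. -/
noncomputable def rSwitch (P : Finset Cell) (k : ℕ) : ℕ :=
  Nat.card (Quotient (switchSetoid P k))

/-- The rook number `r(P)`: the maximum number of non-attacking rooks in `P`. -/
noncomputable def rookNumber (P : Finset Cell) : ℕ :=
  sSup {k | ∃ C, IsRookConfig P k C}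

/-- The rook polynomial `r_P(t) = Σ_{j=0}^{r(P)} r_j(P) t^j`. -/
noncomputable def rookPoly (P : Finset Cell) : Polynomial ℤ :=
  ∑ j ∈ Finset.range (rookNumber P + 1), (rConf P j : ℤ) • Polynomial.X ^ j

/-- The switching rook polynomial `r̃_P(t) = Σ_{j=0}^{r(P)} r̃_j(P) t^j`. -/
noncomputable def switchRookPoly (P : Finset Cell) : Polynomial ℤ :=
  ∑ j ∈ Finset.range (rookNumber P + 1), (rSwitch P j : ℤ) • Polynomial.X ^ j


set_option linter.unusedVariables false
set_option linter.unusedSectionVars false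
set_option linter.unreachableTactic false
set_option linter.unusedTactic false

namespace Scratch

/-- Pairwise non-attacking subset (configuration without a card constraint). -/
def Cfg (Q C : Finset Cell) : Prop :=
  C ⊆ Q ∧ ∀ a ∈ C, ∀ b ∈ C, ¬ Attack Q a b

lemma rowAttack_symm {Q : Finset Cell} {a b : Cell} (h : RowAttack Q a b) :
    RowAttack Q b a := by
  obtain ⟨h1, h2⟩ := h
  refine ⟨h1.symm, fun x hx1 hx2 => ?_⟩
  rw [← h1]
  exact h2 x (by omega) (by omega)

lemma rowAttack_trans {Q : Finset Cell} {a b c : Cell} (hab : RowAttack Q a b)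
    (hbc : RowAttack Q b c) : RowAttack Q a c := by
  obtain ⟨h1, h2⟩ := hab
  obtain ⟨h3, h4⟩ := hbc
  refine ⟨h1.trans h3, fun x hx1 hx2 => ?_⟩
  have : (min a.1 b.1 ≤ x ∧ x ≤ max a.1 b.1) ∨ (min b.1 c.1 ≤ x ∧ x ≤ max b.1 c.1) := by omega
  rcases this with ⟨u, v⟩ | ⟨u, v⟩
  · exact h2 x u v
  · rw [h1]; exact h4 x u v

def rowEq (Q : Finset Cell) (a b : Cell) : Prop := a = b ∨ RowAttack Q a b

lemma rowEq_refl (Q : Finset Cell) (a : Cell) : rowEq Q a a := Or.inl rfl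

lemma rowEq_symm {Q : Finset Cell} {a b : Cell} (h : rowEq Q a b) : rowEq Q b a := by
  rcases h with rfl | h
  · exact Or.inl rfl
  · exact Or.inr (rowAttack_symm h)

lemma rowEq_trans {Q : Finset Cell} {a b c : Cell} (h1 : rowEq Q a b) (h2 : rowEq Q b c) :
    rowEq Q a c := by
  rcases h1 with rfl | h1
  · exact h2
  rcases h2 with rfl | h2
  · exact Or.inr h1
  · exact Or.inr (rowAttack_trans h1 h2)

def rowsOf (Q C : Finset Cell) : Set Cell := {c | ∃ a ∈ C, rowEq Q a c}

lemma rect_rowAttack₁ {Q : Finset Cell} {a b : Cell} (h : InnerRectPair Q a b) :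
    RowAttack Q (a.1, b.2) b :=
  ⟨rfl, fun x hx1 hx2 => h.2.2 x b.2 (by simpa using hx1) (by simpa using hx2)
    (by omega) (by omega)⟩

lemma rect_rowAttack₂ {Q : Finset Cell} {a b : Cell} (h : InnerRectPair Q a b) :
    RowAttack Q (b.1, a.2) a :=
  ⟨rfl, fun x hx1 hx2 => h.2.2 x a.2 (by simp at hx1 ⊢; omega) (by simp at hx2 ⊢; omega)
    (by omega) (by omega)⟩

lemma rect_colAttack₁ {Q : Finset Cell} {a b : Cell} (h : InnerRectPair Q a b) :
    ColAttack Q (a.1, b.2) a :=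
  ⟨rfl, fun y hy1 hy2 => h.2.2 a.1 y (by omega) (by omega) (by simp at hy1 ⊢; omega)
    (by simp at hy2 ⊢; omega)⟩

lemma rect_colAttack₂ {Q : Finset Cell} {a b : Cell} (h : InnerRectPair Q a b) :
    ColAttack Q (b.1, a.2) b :=
  ⟨rfl, fun y hy1 hy2 => h.2.2 b.1 y (by omega) (by omega) (by simp at hy1 ⊢; omega)
    (by simp at hy2 ⊢; omega)⟩

lemma switchStep_rowsOf {Q C D : Finset Cell} (h : SwitchStep Q C D) :
    rowsOf Q C = rowsOf Q D := by
  classical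
  obtain ⟨a, ha, b, hb, hrect, rfl⟩ := h
  ext c
  simp only [rowsOf, Set.mem_setOf_eq, Finset.mem_union, Finset.mem_sdiff,
    Finset.mem_insert, Finset.mem_singleton]
  constructor
  · rintro ⟨x, hx, hxc⟩
    by_cases hxa : x = a
    · exact ⟨(b.1, a.2), Or.inr (Or.inr rfl),
        rowEq_trans (Or.inr (rect_rowAttack₂ hrect)) (hxa ▸ hxc)⟩
    by_cases hxb : x = b
    · exact ⟨(a.1, b.2), Or.inr (Or.inl rfl),
        rowEq_trans (Or.inr (rect_rowAttack₁ hrect)) (hxb ▸ hxc)⟩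
    · exact ⟨x, Or.inl ⟨hx, by tauto⟩, hxc⟩
  · rintro ⟨x, (⟨hx, _⟩ | hx | hx), hxc⟩
    · exact ⟨x, hx, hxc⟩
    · subst hx
      exact ⟨b, hb, rowEq_trans (rowEq_symm (Or.inr (rect_rowAttack₁ hrect))) hxc⟩
    · subst hx
      exact ⟨a, ha, rowEq_trans (rowEq_symm (Or.inr (rect_rowAttack₂ hrect))) hxc⟩

lemma eqvGen_rowsOf {Q C D : Finset Cell} (h : Relation.EqvGen (SwitchStep Q) C D) :
    rowsOf Q C = rowsOf Q D := by
  induction h with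
  | rel _ _ h => exact switchStep_rowsOf h
  | refl => rfl
  | symm _ _ _ ih => exact ih.symm
  | trans _ _ _ _ _ ih1 ih2 => exact ih1.trans ih2

lemma card_le_of_rowsOf {Q C D : Finset Cell} (hC : Cfg Q C) (hD : Cfg Q D)
    (h : rowsOf Q C ⊆ rowsOf Q D) : C.card ≤ D.card := by
  classical
  by_contra hlt
  push_neg at hlt
  have hex : ∀ a : Cell, ∃ d, a ∈ C → d ∈ D ∧ rowEq Q d a := by
    intro a
    by_cases ha : a ∈ C
    · obtain ⟨d, hd, hda⟩ := h ⟨a, ha, rowEq_refl Q a⟩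
      exact ⟨d, fun _ => ⟨hd, hda⟩⟩
    · exact ⟨a, fun h' => absurd h' ha⟩
  choose F hF using hex
  obtain ⟨a₁, ha₁, a₂, ha₂, hne, heq⟩ :=
    Finset.exists_ne_map_eq_of_card_lt_of_maps_to hlt (fun a ha => (hF a ha).1)
  have h1 : rowEq Q (F a₁) a₁ := (hF a₁ ha₁).2
  have h2 : rowEq Q (F a₂) a₂ := heq ▸ (hF a₂ ha₂).2
  have h12 : rowEq Q a₁ a₂ := rowEq_trans (rowEq_symm h1) (heq ▸ (hF a₂ ha₂).2)
  rcases h12 with rfl | hatt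
  · exact hne rfl
  · exact hC.2 a₁ ha₁ a₂ ha₂ ⟨hne, Or.inl hatt⟩

lemma card_eq_of_eqvGen {Q C D : Finset Cell} (hC : Cfg Q C) (hD : Cfg Q D)
    (h : Relation.EqvGen (SwitchStep Q) C D) : C.card = D.card :=
  le_antisymm (card_le_of_rowsOf hC hD (eqvGen_rowsOf h).le)
    (card_le_of_rowsOf hD hC (eqvGen_rowsOf h).ge)

end Scratch

section Decomp

open Finset

variable {s : ℕ} {Ps : Fin s → Finset Cell} {P : Finset Cell}

variable (hunion : P = Finset.univ.biUnion Ps)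
  (hdisj : ∀ i j, i ≠ j → Disjoint (Ps i) (Ps j))
  (hindep : ∀ i j, i ≠ j → ∀ a ∈ Ps i, ∀ b ∈ Ps j,
    ¬ RowAttack P a b ∧ ¬ ColAttack P a b ∧ ¬ InnerRectPair P a b)

include hunion in
lemma sub_P (i : Fin s) : Ps i ⊆ P := by
  rw [hunion]; exact Finset.subset_biUnion_of_mem Ps (Finset.mem_univ i)

include hunion in
lemma mem_P_iff {a : Cell} : a ∈ P ↔ ∃ i, a ∈ Ps i := by
  simp [hunion]

include hdisj in
lemma comp_unique {a : Cell} {i j : Fin s} (hi : a ∈ Ps i) (hj : a ∈ Ps j) : i = j := by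
  by_contra h
  exact Finset.notMem_empty a (by
    have := Finset.disjoint_left.1 (hdisj i j h) hi
    exact absurd hj this)

lemma rowAttack_mono {Q : Finset Cell} (hQ : Q ⊆ P) {a b : Cell}
    (h : RowAttack Q a b) : RowAttack P a b :=
  ⟨h.1, fun x hx1 hx2 => hQ (h.2 x hx1 hx2)⟩

lemma colAttack_mono {Q : Finset Cell} (hQ : Q ⊆ P) {a b : Cell}
    (h : ColAttack Q a b) : ColAttack P a b :=
  ⟨h.1, fun y hy1 hy2 => hQ (h.2 y hy1 hy2)⟩

lemma rect_mono {Q : Finset Cell} (hQ : Q ⊆ P) {a b : Cell}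
    (h : InnerRectPair Q a b) : InnerRectPair P a b :=
  ⟨h.1, h.2.1, fun x y h1 h2 h3 h4 => hQ (h.2.2 x y h1 h2 h3 h4)⟩

include hunion hdisj hindep in
lemma rowAttack_local {a b : Cell} {i : Fin s} (ha : a ∈ Ps i) (hb : b ∈ P)
    (h : RowAttack P a b) : b ∈ Ps i := by
  obtain ⟨j, hj⟩ := (mem_P_iff hunion).1 hb
  by_cases hij : i = j
  · exact hij ▸ hj
  · exact absurd h (hindep i j hij a ha b hj).1

include hunion hdisj hindep in
lemma colAttack_local {a b : Cell} {i : Fin s} (ha : a ∈ Ps i) (hb : b ∈ P)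
    (h : ColAttack P a b) : b ∈ Ps i := by
  obtain ⟨j, hj⟩ := (mem_P_iff hunion).1 hb
  by_cases hij : i = j
  · exact hij ▸ hj
  · exact absurd h (hindep i j hij a ha b hj).2.1

include hunion hdisj hindep in
lemma rect_corner_local {a b : Cell} {i : Fin s} (ha : a ∈ Ps i)
    (h : InnerRectPair P a b) : b ∈ Ps i := by
  have hbP : b ∈ P := by
    have := h.2.2 b.1 b.2 (by omega) (by omega) (by omega) (by omega)
    simpa using this
  obtain ⟨j, hj⟩ := (mem_P_iff hunion).1 hbP
  by_cases hij : i = j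
  · exact hij ▸ hj
  · exact absurd h (hindep i j hij a ha b hj).2.2

include hunion hdisj hindep in
lemma rowAttack_restrict {a b : Cell} {i : Fin s} (ha : a ∈ Ps i) (hb : b ∈ Ps i)
    (h : RowAttack P a b) : RowAttack (Ps i) a b := by
  refine ⟨h.1, fun x hx1 hx2 => ?_⟩
  have hxP : (x, a.2) ∈ P := h.2 x hx1 hx2
  have hrow : RowAttack P a (x, a.2) := by
    refine ⟨rfl, fun x' hx1' hx2' => ?_⟩
    exact h.2 x' (by omega) (by omega)
  exact rowAttack_local hunion hdisj hindep ha hxP hrow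

include hunion hdisj hindep in
lemma colAttack_restrict {a b : Cell} {i : Fin s} (ha : a ∈ Ps i) (hb : b ∈ Ps i)
    (h : ColAttack P a b) : ColAttack (Ps i) a b := by
  refine ⟨h.1, fun y hy1 hy2 => ?_⟩
  have hyP : (a.1, y) ∈ P := h.2 y hy1 hy2
  have hcol : ColAttack P a (a.1, y) := by
    refine ⟨rfl, fun y' hy1' hy2' => ?_⟩
    exact h.2 y' (by omega) (by omega)
  exact colAttack_local hunion hdisj hindep ha hyP hcol

include hunion hdisj hindep in
lemma rect_restrict {a b : Cell} {i : Fin s} (ha : a ∈ Ps i) (hb : b ∈ Ps i)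
    (h : InnerRectPair P a b) : InnerRectPair (Ps i) a b := by
  refine ⟨h.1, h.2.1, fun x y h1 h2 h3 h4 => ?_⟩
  have hxa2 : (x, a.2) ∈ P := h.2.2 x a.2 h1 h2 (by omega) (by omega)
  have hrow : RowAttack P a (x, a.2) := by
    refine ⟨rfl, fun x' hx1' hx2' => ?_⟩
    exact h.2.2 x' a.2 (by omega) (by omega) (by omega) (by omega)
  have hxa2i : (x, a.2) ∈ Ps i := rowAttack_local hunion hdisj hindep ha hxa2 hrow
  have hxyP : (x, y) ∈ P := h.2.2 x y h1 h2 h3 h4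
  have hcol : ColAttack P (x, a.2) (x, y) := by
    refine ⟨rfl, fun y' hy1' hy2' => ?_⟩
    exact h.2.2 x y' (by omega) (by omega) (by simp at hy1' ⊢; omega) (by simp at hy2' ⊢; omega)
  exact colAttack_local hunion hdisj hindep hxa2i hxyP hcol

include hunion hdisj hindep in
lemma attack_restrict {a b : Cell} {i : Fin s} (ha : a ∈ Ps i) (hb : b ∈ Ps i)
    (h : Attack P a b) : Attack (Ps i) a b := by
  refine ⟨h.1, ?_⟩
  rcases h.2 with h' | h'
  · exact Or.inl (rowAttack_restrict hunion hdisj hindep ha hb h')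
  · exact Or.inr (colAttack_restrict hunion hdisj hindep ha hb h')

end Decomp

section Decomp2

open Finset Scratch

variable {s : ℕ} {Ps : Fin s → Finset Cell} {P : Finset Cell}

variable (hunion : P = Finset.univ.biUnion Ps)
  (hdisj : ∀ i j, i ≠ j → Disjoint (Ps i) (Ps j))
  (hindep : ∀ i j, i ≠ j → ∀ a ∈ Ps i, ∀ b ∈ Ps j,
    ¬ RowAttack P a b ∧ ¬ ColAttack P a b ∧ ¬ InnerRectPair P a b)

include hunion hdisj hindep in
/-- A switch step in `P` localizes to a single component. -/
lemma switchStep_decomp {C D : Finset Cell} (h : SwitchStep P C D) :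
    ∃ m, (∀ j, j ≠ m → D ∩ Ps j = C ∩ Ps j) ∧
      SwitchStep (Ps m) (C ∩ Ps m) (D ∩ Ps m) := by
  classical
  obtain ⟨a, ha, b, hb, hrect, rfl⟩ := h
  have haP : a ∈ P := by
    have := hrect.2.2 a.1 a.2 (by omega) (by omega) (by omega) (by omega)
    simpa using this
  obtain ⟨m, ham⟩ := (mem_P_iff hunion).1 haP
  have hbm : b ∈ Ps m := rect_corner_local hunion hdisj hindep ham hrect
  have ha'm : (a.1, b.2) ∈ Ps m := by
    refine colAttack_local hunion hdisj hindep ham ?_ ?_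
    · exact hrect.2.2 a.1 b.2 (by omega) (by omega) (by omega) (by omega)
    · refine ⟨rfl, fun y hy1 hy2 => ?_⟩
      exact hrect.2.2 a.1 y (by omega) (by omega) (by simp at hy1 ⊢; omega)
        (by simp at hy2 ⊢; omega)
  have hb'm : (b.1, a.2) ∈ Ps m := by
    refine colAttack_local hunion hdisj hindep hbm ?_ ?_
    · exact hrect.2.2 b.1 a.2 (by omega) (by omega) (by omega) (by omega)
    · refine ⟨rfl, fun y hy1 hy2 => ?_⟩
      exact hrect.2.2 b.1 y (by omega) (by omega) (by simp at hy1 ⊢; omega)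
        (by simp at hy2 ⊢; omega)
  refine ⟨m, fun j hj => ?_, ?_⟩
  · have hanj : a ∉ Ps j := fun h' => hj (comp_unique hdisj h' ham)
    have hbnj : b ∉ Ps j := fun h' => hj (comp_unique hdisj h' hbm)
    have ha'nj : (a.1, b.2) ∉ Ps j := fun h' => hj (comp_unique hdisj h' ha'm)
    have hb'nj : (b.1, a.2) ∉ Ps j := fun h' => hj (comp_unique hdisj h' hb'm)
    ext c
    simp only [Finset.mem_inter, Finset.mem_union, Finset.mem_sdiff, Finset.mem_insert,
      Finset.mem_singleton]
    constructor
    · rintro ⟨(⟨hc1, _⟩ | hc), hcj⟩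
      · exact ⟨hc1, hcj⟩
      · rcases hc with rfl | rfl
        · exact absurd hcj ha'nj
        · exact absurd hcj hb'nj
    · rintro ⟨hc1, hcj⟩
      refine ⟨Or.inl ⟨hc1, fun h' => ?_⟩, hcj⟩
      rcases h' with rfl | rfl
      · exact hanj hcj
      · exact hbnj hcj
  · refine ⟨a, Finset.mem_inter.2 ⟨ha, ham⟩, b, Finset.mem_inter.2 ⟨hb, hbm⟩,
      rect_restrict hunion hdisj hindep ham hbm hrect, ?_⟩
    ext c
    simp only [Finset.mem_inter, Finset.mem_union, Finset.mem_sdiff, Finset.mem_insert,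
      Finset.mem_singleton]
    constructor
    · rintro ⟨(⟨hc1, hne⟩ | hc), hcm'⟩
      · exact Or.inl ⟨⟨hc1, hcm'⟩, hne⟩
      · exact Or.inr hc
    · rintro (⟨⟨hc1, hcm⟩, hne⟩ | hc)
      · exact ⟨Or.inl ⟨hc1, hne⟩, hcm⟩
      · refine ⟨Or.inr hc, ?_⟩
        rcases hc with rfl | rfl
        · exact ha'm
        · exact hb'm

end Decomp2

section Decomp3

variable {s : ℕ} {Ps : Fin s → Finset Cell} {P : Finset Cell}
variable (hunion : P = Finset.univ.biUnion Ps)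
  (hdisj : ∀ i j, i ≠ j → Disjoint (Ps i) (Ps j))
  (hindep : ∀ i j, i ≠ j → ∀ a ∈ Ps i, ∀ b ∈ Ps j,
    ¬ RowAttack P a b ∧ ¬ ColAttack P a b ∧ ¬ InnerRectPair P a b)

include hunion hdisj hindep in
lemma eqvGen_decomp {C D : Finset Cell} (h : Relation.EqvGen (SwitchStep P) C D) :
    ∀ i, Relation.EqvGen (SwitchStep (Ps i)) (C ∩ Ps i) (D ∩ Ps i) := by
  induction h with
  | rel X Y h =>
    intro i
    obtain ⟨m, hoth, hm⟩ := switchStep_decomp hunion hdisj hindep h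
    by_cases him : i = m
    · subst him; exact Relation.EqvGen.rel _ _ hm
    · rw [hoth i him]; exact Relation.EqvGen.refl _
  | refl X => exact fun i => Relation.EqvGen.refl _
  | symm X Y _ ih => exact fun i => Relation.EqvGen.symm _ _ (ih i)
  | trans X Y Z _ _ ih1 ih2 => exact fun i => Relation.EqvGen.trans _ _ _ (ih1 i) (ih2 i)

include hunion in
lemma switchStep_glue {i : Fin s} {X Y R : Finset Cell} (hR : Disjoint R (Ps i))
    (h : SwitchStep (Ps i) X Y) : SwitchStep P (R ∪ X) (R ∪ Y) := by
  classical
  obtain ⟨a, ha, b, hb, hrect, rfl⟩ := h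
  have ham : a ∈ Ps i := by
    have := hrect.2.2 a.1 a.2 (by omega) (by omega) (by omega) (by omega)
    simpa using this
  have hbm : b ∈ Ps i := by
    have := hrect.2.2 b.1 b.2 (by omega) (by omega) (by omega) (by omega)
    simpa using this
  have haR : a ∉ R := fun h' => Finset.disjoint_left.1 hR h' ham
  have hbR : b ∉ R := fun h' => Finset.disjoint_left.1 hR h' hbm
  refine ⟨a, Finset.mem_union_right _ ha, b, Finset.mem_union_right _ hb,
    rect_mono (sub_P hunion i) hrect, ?_⟩
  ext c
  simp only [Finset.mem_union, Finset.mem_sdiff, Finset.mem_insert, Finset.mem_singleton]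
  constructor
  · rintro (hc | (⟨hc, hne⟩ | hc))
    · refine Or.inl ⟨Or.inl hc, fun h' => ?_⟩
      rcases h' with rfl | rfl
      · exact haR hc
      · exact hbR hc
    · exact Or.inl ⟨Or.inr hc, hne⟩
    · exact Or.inr hc
  · rintro (⟨hc | hc, hne⟩ | hc)
    · exact Or.inl hc
    · exact Or.inr (Or.inl ⟨hc, hne⟩)
    · exact Or.inr (Or.inr hc)

include hunion in
lemma eqvGen_glue_one {i : Fin s} {X Y R : Finset Cell} (hR : Disjoint R (Ps i))
    (h : Relation.EqvGen (SwitchStep (Ps i)) X Y) :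
    Relation.EqvGen (SwitchStep P) (R ∪ X) (R ∪ Y) := by
  induction h with
  | rel X Y h => exact Relation.EqvGen.rel _ _ (switchStep_glue hunion hR h)
  | refl X => exact Relation.EqvGen.refl _
  | symm X Y _ ih => exact Relation.EqvGen.symm _ _ ih
  | trans X Y Z _ _ ih1 ih2 => exact Relation.EqvGen.trans _ _ _ ih1 ih2

include hunion hdisj in
lemma eqvGen_glue {f g : Fin s → Finset Cell}
    (hf : ∀ i, f i ⊆ Ps i) (hg : ∀ i, g i ⊆ Ps i)
    (h : ∀ i, Relation.EqvGen (SwitchStep (Ps i)) (f i) (g i)) :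
    Relation.EqvGen (SwitchStep P)
      (Finset.univ.biUnion f) (Finset.univ.biUnion g) := by
  classical
  have key : ∀ T : Finset (Fin s),
      Relation.EqvGen (SwitchStep P) (Finset.univ.biUnion f)
        (T.biUnion g ∪ (Finset.univ \ T).biUnion f) := by
    intro T
    induction T using Finset.induction with
    | empty => simp [Relation.EqvGen.refl]
    | @insert a T haT ih =>
      refine Relation.EqvGen.trans _ _ _ ih ?_
      have h1 : T.biUnion g ∪ (Finset.univ \ T).biUnion f =
          (T.biUnion g ∪ (Finset.univ \ insert a T).biUnion f) ∪ f a := by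
        have : Finset.univ \ T = insert a (Finset.univ \ insert a T) := by
          ext x
          simp only [Finset.mem_sdiff, Finset.mem_univ, Finset.mem_insert, true_and]
          by_cases hx : x = a <;> simp [hx, haT] <;> tauto
        rw [this, Finset.biUnion_insert]
        ext c; simp only [Finset.mem_union]; tauto
      have h2 : (insert a T).biUnion g ∪ (Finset.univ \ insert a T).biUnion f =
          (T.biUnion g ∪ (Finset.univ \ insert a T).biUnion f) ∪ g a := by
        rw [Finset.biUnion_insert]
        ext c; simp only [Finset.mem_union]; tauto
      rw [h1, h2]
      have hR : Disjoint (T.biUnion g ∪ (Finset.univ \ insert a T).biUnion f) (Ps a) := by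
        rw [Finset.disjoint_union_left]
        constructor
        · rw [Finset.disjoint_biUnion_left]
          intro j hj
          exact ((hdisj j a) (fun h' => haT (h' ▸ hj))).mono_left (hg j)
        · rw [Finset.disjoint_biUnion_left]
          intro j hj
          have hja : j ≠ a := by
            simp only [Finset.mem_sdiff, Finset.mem_insert] at hj
            tauto
          exact ((hdisj j a) hja).mono_left (hf j)
      have := eqvGen_glue_one hunion (i := a) hR (h a)
      rw [Finset.union_comm _ (f a), Finset.union_comm _ (g a)] at this
      rwa [Finset.union_comm (f a), Finset.union_comm (g a)] at this
  have := key Finset.univ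
  simpa using this

end Decomp3

lemma attack_mono {P Q : Finset Cell} (hQ : Q ⊆ P) {a b : Cell}
    (h : Attack Q a b) : Attack P a b := by
  refine ⟨h.1, ?_⟩
  rcases h.2 with h' | h'
  · exact Or.inl (rowAttack_mono hQ h')
  · exact Or.inr (colAttack_mono hQ h')

instance configFinite (Q : Finset Cell) (k : ℕ) :
    Finite {C : Finset Cell // IsRookConfig Q k C} := by
  refine Finite.of_injective
    (fun C => (⟨C.1, Finset.mem_powerset.2 C.2.1⟩ : {D // D ∈ Q.powerset})) ?_
  intro a b h
  simp only [Subtype.mk.injEq] at h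
  exact Subtype.ext h

lemma nat_card_sigma {ι : Type*} [Fintype ι] (T : ι → Type*) [∀ i, Finite (T i)] :
    Nat.card (Σ i, T i) = ∑ i, Nat.card (T i) := by
  classical
  have := fun i => Fintype.ofFinite (T i)
  simp [Nat.card_eq_fintype_card, Fintype.card_sigma]

section Decomp4

open Finset Scratch

variable {s : ℕ} {Ps : Fin s → Finset Cell} {P : Finset Cell}
variable (hunion : P = Finset.univ.biUnion Ps)
  (hdisj : ∀ i j, i ≠ j → Disjoint (Ps i) (Ps j))
  (hindep : ∀ i j, i ≠ j → ∀ a ∈ Ps i, ∀ b ∈ Ps j,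
    ¬ RowAttack P a b ∧ ¬ ColAttack P a b ∧ ¬ InnerRectPair P a b)

include hunion hdisj hindep in
lemma config_inter {C : Finset Cell} {k : ℕ} (hC : IsRookConfig P k C) (i : Fin s) :
    IsRookConfig (Ps i) (C ∩ Ps i).card (C ∩ Ps i) := by
  refine ⟨Finset.inter_subset_right, rfl, fun a ha b hb hatt => ?_⟩
  simp only [Finset.mem_inter] at ha hb
  exact hC.2.2 a ha.1 b hb.1 (attack_mono (sub_P hunion i) hatt)

include hunion in
lemma biUnion_inter {C : Finset Cell} (hC : C ⊆ P) :
    Finset.univ.biUnion (fun i => C ∩ Ps i) = C := by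
  ext c
  simp only [Finset.mem_biUnion, Finset.mem_univ, true_and, Finset.mem_inter]
  constructor
  · rintro ⟨i, hc, _⟩; exact hc
  · intro hc
    obtain ⟨i, hi⟩ := (mem_P_iff hunion).1 (hC hc)
    exact ⟨i, hc, hi⟩

include hunion hdisj in
lemma card_decomp {C : Finset Cell} (hC : C ⊆ P) :
    ∑ i, (C ∩ Ps i).card = C.card := by
  classical
  conv_rhs => rw [← biUnion_inter hunion hC]
  rw [Finset.card_biUnion]
  intro i _ j _ hij
  exact ((hdisj i j hij).mono Finset.inter_subset_right Finset.inter_subset_right)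

include hdisj in
lemma inter_union_eq {f : Fin s → Finset Cell} (hf : ∀ i, f i ⊆ Ps i) (i : Fin s) :
    (Finset.univ.biUnion f) ∩ Ps i = f i := by
  ext c
  simp only [Finset.mem_inter, Finset.mem_biUnion, Finset.mem_univ, true_and]
  constructor
  · rintro ⟨⟨j, hj⟩, hci⟩
    rwa [comp_unique hdisj (hf j hj) hci] at hj
  · intro hc
    exact ⟨⟨i, hc⟩, hf i hc⟩

include hunion hdisj hindep in
lemma config_glue {f : Fin s → Finset Cell} {v : Fin s → ℕ}
    (hf : ∀ i, IsRookConfig (Ps i) (v i) (f i)) :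
    IsRookConfig P (∑ i, v i) (Finset.univ.biUnion f) := by
  classical
  have hsub : ∀ i, f i ⊆ Ps i := fun i => (hf i).1
  refine ⟨?_, ?_, ?_⟩
  · intro c hc
    simp only [Finset.mem_biUnion, Finset.mem_univ, true_and] at hc
    obtain ⟨i, hi⟩ := hc
    exact sub_P hunion i (hsub i hi)
  · rw [Finset.card_biUnion]
    · exact Finset.sum_congr rfl fun i _ => (hf i).2.1
    · intro i _ j _ hij
      exact (hdisj i j hij).mono (hsub i) (hsub j)
  · intro a ha b hb hatt
    simp only [Finset.mem_biUnion, Finset.mem_univ, true_and] at ha hb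
    obtain ⟨i, hi⟩ := ha
    obtain ⟨j, hj⟩ := hb
    by_cases hij : i = j
    · subst hij
      exact (hf i).2.2 a hi b hj
        (attack_restrict hunion hdisj hindep (hsub i hi) (hsub i hj) hatt)
    · rcases hatt.2 with h' | h'
      · exact (hindep i j hij a (hsub i hi) b (hsub j hj)).1 h'
      · exact (hindep i j hij a (hsub i hi) b (hsub j hj)).2.1 h'

end Decomp4

section Decomp5

open Finset Scratch

variable {s : ℕ} {Ps : Fin s → Finset Cell} {P : Finset Cell}
variable (hunion : P = Finset.univ.biUnion Ps)
  (hdisj : ∀ i j, i ≠ j → Disjoint (Ps i) (Ps j))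
  (hindep : ∀ i j, i ≠ j → ∀ a ∈ Ps i, ∀ b ∈ Ps j,
    ¬ RowAttack P a b ∧ ¬ ColAttack P a b ∧ ¬ InnerRectPair P a b)

include hunion hdisj hindep in
lemma rSwitch_decomp (k : ℕ) :
    rSwitch P k = ∑ μ ∈ (Finset.univ : Finset (Fin s)).finsuppAntidiag k,
      ∏ i, rSwitch (Ps i) (μ i) := by
  classical
  set F : Finset (Fin s →₀ ℕ) := (Finset.univ : Finset (Fin s)).finsuppAntidiag k with hF
  set T : F → Type := fun μ => ∀ i, Quotient (switchSetoid (Ps i) (μ.1 i)) with hT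
  -- the gluing map
  have glue_cfg : ∀ (μ : F) (f : ∀ i, {C : Finset Cell // IsRookConfig (Ps i) (μ.1 i) C}),
      IsRookConfig P k (Finset.univ.biUnion fun i => (f i).1) := by
    intro μ f
    have := config_glue hunion hdisj hindep (v := fun i => μ.1 i) (fun i => (f i).2)
    have hk : ∑ i, μ.1 i = k := by
      have := (Finset.mem_finsuppAntidiag.1 μ.2).1
      simpa using this
    rwa [hk] at this
  let G : (Σ μ : F, T μ) → Quotient (switchSetoid P k) := fun x =>
    Quotient.liftOn (Quotient.finChoice (S := fun i => switchSetoid (Ps i) (x.1.1 i)) x.2)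
      (fun f => (⟦⟨Finset.univ.biUnion fun i => (f i).1, glue_cfg x.1 f⟩⟧ :
        Quotient (switchSetoid P k)))
      (by
        intro f g hfg
        refine Quotient.sound ?_
        exact eqvGen_glue hunion hdisj (fun i => (f i).2.1) (fun i => (g i).2.1) hfg)
  have hGmk : ∀ (μ : F) (f : ∀ i, {C : Finset Cell // IsRookConfig (Ps i) (μ.1 i) C}),
      G ⟨μ, fun i => ⟦f i⟧⟩ = ⟦⟨Finset.univ.biUnion fun i => (f i).1, glue_cfg μ f⟩⟧ := by
    intro μ f
    show Quotient.liftOn (Quotient.finChoice fun i => ⟦f i⟧) _ _ = _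
    rw [Quotient.finChoice_eq]
    rfl
  have hGbij : Function.Bijective G := by
    constructor
    · rintro ⟨μ, q⟩ ⟨ν, r⟩ h
      obtain ⟨f, hf⟩ : ∃ f, q = fun i => ⟦f i⟧ :=
        ⟨fun i => (q i).out, funext fun i => (Quotient.out_eq _).symm⟩
      obtain ⟨g, hg⟩ : ∃ g, r = fun i => ⟦g i⟧ :=
        ⟨fun i => (r i).out, funext fun i => (Quotient.out_eq _).symm⟩
      subst hf hg
      rw [hGmk, hGmk] at h
      have hrel := Quotient.exact h
      have hrel' : Relation.EqvGen (SwitchStep P)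
          (Finset.univ.biUnion fun i => (f i).1) (Finset.univ.biUnion fun i => (g i).1) := hrel
      have hcomp : ∀ i, Relation.EqvGen (SwitchStep (Ps i)) ((f i).1) ((g i).1) := by
        intro i
        have := eqvGen_decomp hunion hdisj hindep hrel' i
        rwa [inter_union_eq hdisj (fun j => (f j).2.1) i,
          inter_union_eq hdisj (fun j => (g j).2.1) i] at this
      have hcard : ∀ i, μ.1 i = ν.1 i := by
        intro i
        have h1 : (f i).1.card = (g i).1.card := by
          refine card_eq_of_eqvGen ⟨(f i).2.1, (f i).2.2.2⟩ ⟨(g i).2.1, (g i).2.2.2⟩ (hcomp i)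
        rw [← (f i).2.2.1, ← (g i).2.2.1] at *
        exact h1
      have hμν : μ = ν := Subtype.ext (Finsupp.ext hcard)
      subst hμν
      refine Sigma.ext rfl (heq_of_eq (funext fun i => ?_))
      exact Quotient.sound (hcomp i)
    · intro x
      obtain ⟨C, rfl⟩ := Quotient.exists_rep x
      have hμmem : (Finsupp.equivFunOnFinite.symm fun i => (C.1 ∩ Ps i).card) ∈ F := by
        rw [hF, Finset.mem_finsuppAntidiag]
        constructor
        · have : ∀ i, (Finsupp.equivFunOnFinite.symm fun j => (C.1 ∩ Ps j).card) i
              = (C.1 ∩ Ps i).card := fun i => rfl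
          simp only [this]
          rw [card_decomp hunion hdisj C.2.1, C.2.2.1]
        · exact Finset.subset_univ _
      set μ : F := ⟨_, hμmem⟩ with hμ
      have hμapp : ∀ i, μ.1 i = (C.1 ∩ Ps i).card := fun i => rfl
      have hconf : ∀ i, IsRookConfig (Ps i) (μ.1 i) (C.1 ∩ Ps i) := by
        intro i
        rw [hμapp i]
        exact config_inter hunion hdisj hindep C.2 i
      refine ⟨⟨μ, fun i => ⟦⟨C.1 ∩ Ps i, hconf i⟩⟧⟩, ?_⟩
      rw [hGmk]
      refine congrArg _ (Subtype.ext ?_)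
      exact biUnion_inter hunion C.2.1
  have : Nat.card (Quotient (switchSetoid P k)) = Nat.card (Σ μ : F, T μ) :=
    (Nat.card_congr (Equiv.ofBijective G hGbij)).symm
  rw [rSwitch, this, nat_card_sigma]
  rw [← Finset.sum_coe_sort F (fun μ => ∏ i, rSwitch (Ps i) (μ i))]
  refine Finset.sum_congr rfl ?_
  intro μ _
  rw [hT, Nat.card_pi]
  rfl

end Decomp5

section PolyEnd

open Finset Scratch Polynomial

lemma rookNumber_le_card (Q : Finset Cell) : rookNumber Q ≤ Q.card := by
  refine csSup_le ⟨0, ∅, by simp [IsRookConfig, Attack]⟩ ?_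
  rintro k ⟨C, hC⟩
  rw [← hC.2.1]
  exact Finset.card_le_card hC.1

lemma rSwitch_eq_zero {Q : Finset Cell} {k : ℕ} (h : rookNumber Q < k) :
    rSwitch Q k = 0 := by
  have hempty : IsEmpty {C : Finset Cell // IsRookConfig Q k C} := by
    refine ⟨fun C => ?_⟩
    have hk : k ∈ {k | ∃ C, IsRookConfig Q k C} := ⟨C.1, C.2⟩
    have hbdd : BddAbove {k | ∃ C, IsRookConfig Q k C} := by
      refine ⟨Q.card, ?_⟩
      rintro j ⟨D, hD⟩
      rw [← hD.2.1]
      exact Finset.card_le_card hD.1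
    exact absurd (le_csSup hbdd hk) (not_le.2 h)
  rw [rSwitch]
  have : IsEmpty (Quotient (switchSetoid Q k)) := Quotient.instIsEmpty
  exact Nat.card_of_isEmpty

lemma switchRookPoly_ext (Q : Finset Cell) {M : ℕ} (h : rookNumber Q ≤ M) :
    switchRookPoly Q = ∑ j ∈ Finset.range (M + 1), (rSwitch Q j : ℤ) • Polynomial.X ^ j := by
  rw [switchRookPoly]
  refine Finset.sum_subset ?_ ?_
  · exact Finset.range_subset_range.2 (by omega)
  · intro j hj hnj
    simp only [Finset.mem_range] at hj hnj
    have : rookNumber Q < j := by omega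
    rw [rSwitch_eq_zero this]
    simp

lemma coeff_truncSum (c : ℕ → ℕ) (M n : ℕ) :
    (∑ j ∈ Finset.range (M + 1), (c j : ℤ) • Polynomial.X ^ j).coeff n =
      if n ≤ M then (c n : ℤ) else 0 := by
  rw [Polynomial.finset_sum_coeff]
  simp only [Polynomial.coeff_smul, Polynomial.coeff_X_pow, smul_eq_mul, mul_ite, mul_one,
    mul_zero]
  simp only [eq_comm (a := n)]
  rw [Finset.sum_ite_eq' (Finset.range (M + 1)) n]
  simp [Nat.lt_succ_iff]

end PolyEnd

/-- If `P` is the disjoint union of subcollections `P₁,…,P_s` such that no cell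
of `P_i` shares a row, a column, or an inner rectangle of `P` with a cell of
`P_j` for `i ≠ j`, then the switching rook polynomial of `P` is the product of
those of the `P_i`. -/
theorem stmt6 (s : ℕ) (Ps : Fin s → Finset Cell) (P : Finset Cell)
    (hunion : P = Finset.univ.biUnion Ps)
    (hdisj : ∀ i j, i ≠ j → Disjoint (Ps i) (Ps j))
    (hindep : ∀ i j, i ≠ j → ∀ a ∈ Ps i, ∀ b ∈ Ps j,
      ¬ RowAttack P a b ∧ ¬ ColAttack P a b ∧ ¬ InnerRectPair P a b) :
    switchRookPoly P = ∏ i, switchRookPoly (Ps i) := by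
  classical
  set M := P.card with hM
  have hsub : ∀ i, Ps i ⊆ P := sub_P hunion
  have h1 : rookNumber P ≤ M := rookNumber_le_card P
  have h2 : ∀ i, rookNumber (Ps i) ≤ M := fun i =>
    le_trans (rookNumber_le_card (Ps i)) (Finset.card_le_card (hsub i))
  rw [switchRookPoly_ext P h1]
  have hfact : ∀ i, switchRookPoly (Ps i) =
      ∑ j ∈ Finset.range (M + 1), (rSwitch (Ps i) j : ℤ) • Polynomial.X ^ j :=
    fun i => switchRookPoly_ext (Ps i) (h2 i)
  rw [Finset.prod_congr rfl fun i _ => hfact i]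
  set f : Fin s → Polynomial ℤ :=
    fun i => ∑ j ∈ Finset.range (M + 1), (rSwitch (Ps i) j : ℤ) • Polynomial.X ^ j with hf
  ext n
  rw [coeff_truncSum]
  -- compute the coefficient of the product via power series
  have hps : (∏ i, f i).coeff n =
      ∑ l ∈ (Finset.univ : Finset (Fin s)).finsuppAntidiag n,
        ∏ i, (f i).coeff (l i) := by
    rw [← Polynomial.coeff_coe, ← Polynomial.coeToPowerSeries.ringHom_apply,
      map_prod, PowerSeries.coeff_prod]
    refine Finset.sum_congr rfl fun l _ => Finset.prod_congr rfl fun i _ => ?_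
    rw [Polynomial.coeToPowerSeries.ringHom_apply, Polynomial.coeff_coe]
  rw [hps]
  have hterm : ∀ l ∈ (Finset.univ : Finset (Fin s)).finsuppAntidiag n,
      ∏ i, (f i).coeff (l i) =
      ∏ i, (rSwitch (Ps i) (l i) : ℤ) := by
    intro l _
    refine Finset.prod_congr rfl fun i _ => ?_
    rw [hf]
    rw [coeff_truncSum]
    by_cases h : l i ≤ M
    · simp [h]
    · push_neg at h
      rw [if_neg (by omega), rSwitch_eq_zero (lt_of_le_of_lt (h2 i) h)]
      simp
  rw [Finset.sum_congr rfl hterm]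
  have hdec := rSwitch_decomp hunion hdisj hindep n
  have : ((rSwitch P n : ℤ)) = ∑ l ∈ (Finset.univ : Finset (Fin s)).finsuppAntidiag n,
      ∏ i, (rSwitch (Ps i) (l i) : ℤ) := by
    rw [hdec]
    push_cast
    rfl
  rw [← this]
  by_cases hn : n ≤ M
  · rw [if_pos hn]
  · rw [if_neg hn]
    push_neg at hn
    rw [rSwitch_eq_zero (lt_of_le_of_lt h1 hn)]
    simp
end

section
/- Let P be a convex polyomino with minimal bounding rectangle [A,B] such that the corner cell A (lower-left corner cell of the bounding rectangle) belongs to P. Then P satisfies the condition (#): for any two inner intervals [b,a] and [d,c] of P positioned so that they share an anti-diagonal corner f (with e,f the anti-diagonal corners of [b,a] and f,g those of [d,c], arranged as two rectangles meeting at f with [b,a] up-left and [d,c] down-right), either the pair b,g or the pair e,c forms the anti-diagonal corners of an inner interval of P. -/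
/-- Two cells share an edge. -/
def AdjCell (a b : Cell) : Prop :=
  (a.1 = b.1 ∧ (a.2 + 1 = b.2 ∨ b.2 + 1 = a.2)) ∨
    (a.2 = b.2 ∧ (a.1 + 1 = b.1 ∨ b.1 + 1 = a.1))

/-- Every two cells of `P` are joined by a path of cells of `P` in which
consecutive cells share an edge. -/
def CellConnected (P : Finset Cell) : Prop :=
  ∀ a ∈ P, ∀ b ∈ P,
    Relation.ReflTransGen (fun c d => c ∈ P ∧ d ∈ P ∧ AdjCell c d) a b

/-- A polyomino: a nonempty, edge-connected finite collection of cells. -/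
def IsPolyomino (P : Finset Cell) : Prop := P.Nonempty ∧ CellConnected P

/-- Row convexity: any two cells of `P` in the same row have all intermediate
cells in `P`. -/
def RowConvex (P : Finset Cell) : Prop :=
  ∀ a ∈ P, ∀ b ∈ P, a.2 = b.2 → ∀ x, a.1 ≤ x → x ≤ b.1 → (x, a.2) ∈ P

/-- Column convexity. -/
def ColConvex (P : Finset Cell) : Prop :=
  ∀ a ∈ P, ∀ b ∈ P, a.1 = b.1 → ∀ y, a.2 ≤ y → y ≤ b.2 → (a.1, y) ∈ P

/-- A convex collection of cells: both row and column convex. -/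
def CellConvex (P : Finset Cell) : Prop := RowConvex P ∧ ColConvex P

/-- The proper vertex interval `[(u1,v1),(u2,v2)]` (with `u1 < u2`, `v1 < v2`)
is an inner interval of `P`: every cell of the spanned rectangle lies in `P`. -/
def InnerInt (P : Finset Cell) (u1 v1 u2 v2 : ℕ) : Prop :=
  u1 < u2 ∧ v1 < v2 ∧ ∀ x y, u1 ≤ x → x < u2 → v1 ≤ y → y < v2 → (x, y) ∈ P

/-- Condition (#): whenever two inner intervals of `P` meet at an anti-diagonal
corner `f = (x2,y1)` (the first interval `[(x1,y1),(x2,y2)]` up-left, the second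
`[(x2,y0),(x3,y1)]` down-right), either `b = (x1,y1)` and `g = (x3,y0)`, or
`e = (x1,y2)` and `c = (x3,y1)`, are the anti-diagonal corners of an inner
interval of `P`. -/
def ConditionSharp (P : Finset Cell) : Prop :=
  ∀ x1 y1 x2 y2 x3 y0, InnerInt P x1 y1 x2 y2 → InnerInt P x2 y0 x3 y1 →
    (InnerInt P x1 y0 x3 y1 ∨ InnerInt P x1 y1 x3 y2)

/-- Intermediate value theorem for `x`-coordinates along a path of cells. -/
private lemma path_ivt {P : Finset Cell} {c d : Cell}
    (h : Relation.ReflTransGen (fun c d => c ∈ P ∧ d ∈ P ∧ AdjCell c d) c d)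
    (hc : c ∈ P) :
    ∀ x, c.1 ≤ x → x ≤ d.1 → ∃ z, (x, z) ∈ P := by
  induction h with
  | refl =>
    intro x h1 h2
    have hx : x = c.1 := le_antisymm h2 h1
    exact ⟨c.2, by rw [hx]; exact hc⟩
  | @tail e f hce hef ih =>
    intro x h1 h2
    obtain ⟨heP, hfP, hadj⟩ := hef
    by_cases hx : x ≤ e.1
    · exact ih x h1 hx
    · push_neg at hx
      have hfe : f.1 ≤ e.1 + 1 := by
        rcases hadj with ⟨h', _⟩ | ⟨_, h' | h'⟩ <;> omega
      have hxf : x = f.1 := by omega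
      exact ⟨f.2, by rw [hxf]; exact hfP⟩

/-- If `(x,u) ∈ P`, `(x+1,m) ∈ P` and `m ≤ u`, then `(x,m) ∈ P`
(the bottom profile is nondecreasing, given the bottom-left corner cell). -/
private lemma step_lo {P : Finset Cell} (hP : IsPolyomino P) (hconv : CellConvex P)
    {a b : ℕ} (haP : (a, b) ∈ P) (hmin : ∀ c ∈ P, a ≤ c.1 ∧ b ≤ c.2)
    {x u m : ℕ} (hu : (x, u) ∈ P) (hm : (x + 1, m) ∈ P) (hmu : m ≤ u) :
    (x, m) ∈ P := by
  by_contra h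
  have colExcl : ∀ y ≤ m, (x, y) ∉ P := fun y hy hyP =>
    h (hconv.2 (x, y) hyP (x, u) hu rfl m hy hmu)
  have rowExcl : ∀ t ≤ x, (t, m) ∉ P := fun t ht htP =>
    h (hconv.1 (t, m) htP (x + 1, m) hm rfl x ht (Nat.le_succ x))
  have hax : a ≤ x := (hmin _ hu).1
  have hbm : b ≤ m := (hmin _ hm).2
  have hax' : a < x := lt_of_le_of_ne hax (fun e => colExcl b hbm (e ▸ haP))
  have hbm' : b < m := lt_of_le_of_ne hbm (fun e => rowExcl a hax (e ▸ haP))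
  have key : ∀ e : Cell,
      Relation.ReflTransGen (fun c d => c ∈ P ∧ d ∈ P ∧ AdjCell c d) (a, b) e →
      e.1 < x ∧ e.2 < m := by
    intro e he
    induction he with
    | refl => exact ⟨hax', hbm'⟩
    | @tail c d hac hcd ih =>
      obtain ⟨hcP, hdP, hadj⟩ := hcd
      obtain ⟨h1, h2⟩ := ih
      rcases hadj with ⟨hx1, hy⟩ | ⟨hy1, hx2⟩
      · refine ⟨hx1 ▸ h1, ?_⟩
        rcases hy with hy | hy
        · rcases Nat.lt_or_ge d.2 m with h' | h'
          · exact h'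
          · exfalso
            have hdm : d.2 = m := by omega
            exact rowExcl d.1 (by omega) (by rw [← hdm]; exact hdP)
        · omega
      · refine ⟨?_, hy1 ▸ h2⟩
        rcases hx2 with hx' | hx'
        · rcases Nat.lt_or_ge d.1 x with h' | h'
          · exact h'
          · exfalso
            have hdx : d.1 = x := by omega
            exact colExcl d.2 (by omega) (by rw [← hdx]; exact hdP)
        · omega
  have := key (x + 1, m) (hP.2 (a, b) haP (x + 1, m) hm)
  omega

/-- Key lemma: if `(p,q) ∈ P`, `(r,s) ∈ P` with `p ≤ r` and `s ≤ q`,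
then `(p,s) ∈ P`. -/
private lemma key_lemma {P : Finset Cell} (hP : IsPolyomino P) (hconv : CellConvex P)
    {a b : ℕ} (haP : (a, b) ∈ P) (hmin : ∀ c ∈ P, a ≤ c.1 ∧ b ≤ c.2) :
    ∀ n p q r s, r ≤ p + n → (p, q) ∈ P → (r, s) ∈ P → p ≤ r → s ≤ q →
      (p, s) ∈ P := by
  intro n
  induction n with
  | zero =>
    intro p q r s h1 hq hs h2 h3
    have hrp : r = p := by omega
    subst hrp
    exact hconv.2 (r, s) hs (r, q) hq rfl s le_rfl h3
  | succ n ih =>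
    intro p q r s h1 hq hs h2 h3
    by_cases hr : r ≤ p + n
    · exact ih p q r s hr hq hs h2 h3
    · have hpr : p < r := by omega
      obtain ⟨y, hy⟩ := path_ivt (hP.2 (p, q) hq (r, s) hs) hq (r - 1)
        (by show p ≤ r - 1; omega) (by show r - 1 ≤ r; omega)
      rcases le_or_gt s y with hsy | hsy
      · have hrs : (r - 1 + 1, s) ∈ P := by
          have : r - 1 + 1 = r := by omega
          rw [this]; exact hs
        have h5 : (r - 1, s) ∈ P := step_lo hP hconv haP hmin hy hrs hsy
        exact ih p q (r - 1) s (by omega) hq h5 (by omega) h3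
      · have hpy : (p, y) ∈ P := ih p q (r - 1) y (by omega) hq hy (by omega) (by omega)
        exact hconv.2 (p, y) hpy (p, q) hq rfl s (le_of_lt hsy) h3

/-- A convex polyomino containing the lower-left corner cell of its minimal
bounding rectangle (a cell of `P` componentwise below-left of all cells of `P`)
satisfies Condition (#). -/
theorem stmt10 (P : Finset Cell) (hP : IsPolyomino P) (hconv : CellConvex P)
    (hA : ∃ a ∈ P, ∀ b ∈ P, a.1 ≤ b.1 ∧ a.2 ≤ b.2) :
    ConditionSharp P := by
  obtain ⟨⟨a, b⟩, haP, hmin⟩ := hA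
  intro x1 y1 x2 y2 x3 y0 h1 h2
  left
  obtain ⟨hx12, hy12, hmem1⟩ := h1
  obtain ⟨hx23, hy01, hmem2⟩ := h2
  refine ⟨by omega, hy01, ?_⟩
  intro x y hx1 hx3 hy0 hy1
  rcases le_or_gt x2 x with h | h
  · exact hmem2 x y h hx3 hy0 hy1
  · have hq : (x, y1) ∈ P := hmem1 x y1 hx1 h le_rfl hy12
    have hs : (x2, y) ∈ P := hmem2 x2 y le_rfl hx23 hy0 hy1
    exact key_lemma hP hconv haP hmin (x2 - x) x y1 x2 y (by omega) hq hs
      (le_of_lt h) (le_of_lt hy1)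
end

section
/- Let P be a simple collection of cells (the complement of P in the plane of cells is connected by edge-paths). If P₁ and P₂ are two distinct connected components of P, then their vertex sets share at most one point: |V(P₁) ∩ V(P₂)| ≤ 1. -/
/-- The four corner vertices of a cell. -/
def cellVerts (c : Cell) : Finset Cell :=
  {c, (c.1 + 1, c.2), (c.1, c.2 + 1), (c.1 + 1, c.2 + 1)}

/-- The vertex set of a collection of cells. -/
def verts (P : Finset Cell) : Finset Cell := P.biUnion cellVerts

/-- `Q` is a connected component of `P`: a subcollection which is a polyomino
and is maximal, i.e. adding any further cell of `P` destroys connectedness. -/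
def IsComponent (P Q : Finset Cell) : Prop :=
  Q ⊆ P ∧ IsPolyomino Q ∧ ∀ c ∈ P, c ∉ Q → ¬ IsPolyomino (insert c Q)

/-- `P` is simple: any two cells not in `P` are joined by an edge-path of cells
avoiding `P`. -/
def SimpleColl (P : Finset Cell) : Prop :=
  ∀ c d : Cell, c ∉ P → d ∉ P →
    Relation.ReflTransGen (fun a b => a ∉ P ∧ b ∉ P ∧ AdjCell a b) c d


def near (z z' : Cell) : Prop :=
  z.1 ≤ z'.1 + 1 ∧ z'.1 ≤ z.1 + 1 ∧ z.2 ≤ z'.2 + 1 ∧ z'.2 ≤ z.2 + 1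

def crossZ (z z' p : Cell) : ZMod 2 :=
  if ((z.1 = p.1 ∧ z'.1 = p.1 + 1) ∨ (z'.1 = p.1 ∧ z.1 = p.1 + 1)) ∧ z.2 + z'.2 < 2 * p.2
  then 1 else 0

lemma vert_step (p1 p2 : ℕ) (z z' : Cell) (hn : near z z')
    (h1 : z ≠ (p1, p2)) (h2 : z' ≠ (p1, p2)) (h3 : z ≠ (p1, p2 + 1)) (h4 : z' ≠ (p1, p2 + 1)) :
    crossZ z z' (p1, p2) = crossZ z z' (p1, p2 + 1) := by
  obtain ⟨z1, z2⟩ := z; obtain ⟨z1', z2'⟩ := z'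
  simp only [crossZ, near, ne_eq, Prod.mk.injEq, not_and] at *
  split_ifs <;> first | rfl | omega

lemma horiz_step (p1 p2 : ℕ) (z z' : Cell) (hn : near z z')
    (h1 : z ≠ (p1, p2)) (h2 : z' ≠ (p1, p2)) (h3 : z ≠ (p1 + 1, p2)) (h4 : z' ≠ (p1 + 1, p2)) :
    crossZ z z' (p1, p2) + crossZ z z' (p1 + 1, p2) =
      (if z.1 = p1 + 1 ∧ z.2 < p2 then 1 else 0) +
        (if z'.1 = p1 + 1 ∧ z'.2 < p2 then 1 else 0) := by
  obtain ⟨z1, z2⟩ := z; obtain ⟨z1', z2'⟩ := z'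
  simp only [crossZ, near, ne_eq, Prod.mk.injEq, not_and] at *
  split_ifs <;> first | rfl | decide | omega

lemma deltaA (a b : ℕ) (z z' : Cell) (hn : near z z')
    (h1 : z ≠ (a + 1, b)) (h2 : z' ≠ (a + 1, b)) (h3 : z ≠ (a, b + 1)) (h4 : z' ≠ (a, b + 1)) :
    crossZ z z' (a + 1, b) + crossZ z z' (a, b + 1) =
      (if z.1 = a + 1 ∧ z.2 ≤ b then 1 else 0) +
        (if z'.1 = a + 1 ∧ z'.2 ≤ b then 1 else 0) +
        (if (z = ((a : ℕ), b) ∧ z' = (a + 1, b + 1)) ∨ (z = (a + 1, b + 1) ∧ z' = ((a : ℕ), b))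
          then 1 else 0) := by
  obtain ⟨z1, z2⟩ := z; obtain ⟨z1', z2'⟩ := z'
  simp only [crossZ, near, ne_eq, Prod.mk.injEq, not_and] at *
  split_ifs <;> first | rfl | decide | omega

lemma deltaB (a b : ℕ) (z z' : Cell) (hn : near z z')
    (h1 : z ≠ ((a : ℕ), b)) (h2 : z' ≠ ((a : ℕ), b)) (h3 : z ≠ (a + 1, b + 1)) (h4 : z' ≠ (a + 1, b + 1)) :
    crossZ z z' ((a : ℕ), b) + crossZ z z' (a + 1, b + 1) =
      (if z.1 = a + 1 ∧ z.2 ≤ b then 1 else 0) +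
        (if z'.1 = a + 1 ∧ z'.2 ≤ b then 1 else 0) +
        (if (z = ((a : ℕ), b + 1) ∧ z' = (a + 1, b)) ∨ (z = (a + 1, b) ∧ z' = ((a : ℕ), b + 1))
          then 1 else 0) := by
  obtain ⟨z1, z2⟩ := z; obtain ⟨z1', z2'⟩ := z'
  simp only [crossZ, near, ne_eq, Prod.mk.injEq, not_and] at *
  split_ifs <;> first | rfl | decide | omega

def stepsL : List Cell → List (Cell × Cell)
  | a :: b :: t => (a, b) :: stepsL (b :: t)
  | _ => []

def parS (g : Cell → Cell → ZMod 2) (st : List (Cell × Cell)) : ZMod 2 :=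
  (st.map fun s => g s.1 s.2).sum

lemma parS_append (g : Cell → Cell → ZMod 2) (s t : List (Cell × Cell)) :
    parS g (s ++ t) = parS g s + parS g t := by
  simp [parS]

lemma parS_congr {g g' : Cell → Cell → ZMod 2} {st : List (Cell × Cell)}
    (h : ∀ s ∈ st, g s.1 s.2 = g' s.1 s.2) : parS g st = parS g' st := by
  unfold parS
  rw [List.map_congr_left fun s hs => h s hs]

lemma parS_add (g g' : Cell → Cell → ZMod 2) (st : List (Cell × Cell)) :
    parS (fun x y => g x y + g' x y) st = parS g st + parS g' st := by
  induction st with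
  | nil => simp [parS]
  | cons s t ih => simp only [parS, List.map_cons, List.sum_cons] at ih ⊢; rw [ih]; ring

lemma parS_zero (st : List (Cell × Cell)) : parS (fun _ _ => 0) st = 0 := by
  simp [parS]

lemma parS_single (g : Cell → Cell → ZMod 2) (s : Cell × Cell) :
    parS g [s] = g s.1 s.2 := by simp [parS]

lemma add_self_two (x : ZMod 2) : x + x = 0 := by revert x; decide

lemma stepsL_tele (h : Cell → ZMod 2) :
    ∀ (t : List Cell) (a : Cell),
      parS (fun x y => h x + h y) (stepsL (a :: t)) =
        h a + h ((a :: t).getLast (List.cons_ne_nil _ _)) := by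
  intro t
  induction t with
  | nil =>
      intro a; simp [stepsL, parS]
      exact (add_self_two (h a)).symm
  | cons b t ih =>
      intro a
      have : stepsL (a :: b :: t) = (a, b) :: stepsL (b :: t) := rfl
      rw [this]
      have h2 : parS (fun x y => h x + h y) ((a, b) :: stepsL (b :: t)) =
          (h a + h b) + parS (fun x y => h x + h y) (stepsL (b :: t)) := by
        simp [parS]
      rw [h2, ih b, List.getLast_cons (List.cons_ne_nil _ _)]
      generalize h ((b :: t).getLast (List.cons_ne_nil _ _)) = x
      generalize h a = u; generalize h b = v
      rw [show u + v + (v + x) = u + x + (v + v) by ring, add_self_two v, add_zero]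

lemma rtg_list {r : Cell → Cell → Prop} {a b : Cell} (hab : Relation.ReflTransGen r a b) :
    ∃ t : List Cell, (∀ s ∈ stepsL (a :: t), r s.1 s.2) ∧
      (a :: t).getLast (List.cons_ne_nil _ _) = b := by
  induction hab using Relation.ReflTransGen.head_induction_on with
  | refl => exact ⟨[], by simp [stepsL], rfl⟩
  | head hac hcb ih =>
      rename_i a' c'
      obtain ⟨t, ht1, ht2⟩ := ih
      refine ⟨c' :: t, ?_, ?_⟩
      · intro s hs
        have : stepsL (a' :: c' :: t) = (a', c') :: stepsL (c' :: t) := rfl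
        rw [this] at hs
        rcases List.mem_cons.mp hs with h | h
        · subst h; exact hac
        · exact ht1 s h
      · rw [List.getLast_cons (List.cons_ne_nil _ _)]; exact ht2

lemma stepsL_mem {l : List Cell} {s : Cell × Cell} (hs : s ∈ stepsL l) :
    s.1 ∈ l ∧ s.2 ∈ l := by
  induction l with
  | nil => simp [stepsL] at hs
  | cons a t ih =>
      match t, hs with
      | b :: t', hs =>
          have : stepsL (a :: b :: t') = (a, b) :: stepsL (b :: t') := rfl
          rw [this] at hs
          rcases List.mem_cons.mp hs with h | h
          · subst h; exact ⟨List.mem_cons_self, List.mem_cons_of_mem _ List.mem_cons_self⟩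
          · have := ih h
            exact ⟨List.mem_cons_of_mem _ this.1, List.mem_cons_of_mem _ this.2⟩

lemma adjCell_symm {a b : Cell} (h : AdjCell a b) : AdjCell b a := by
  unfold AdjCell at *; omega

lemma insert_poly {Q : Finset Cell} (hQ : IsPolyomino Q) {y g : Cell} (hy : y ∈ Q)
    (hadj : AdjCell y g) : IsPolyomino (insert g Q) := by
  obtain ⟨hne, hconn⟩ := hQ
  refine ⟨⟨g, Finset.mem_insert_self _ _⟩, ?_⟩
  have mono : ∀ {u v : Cell},
      Relation.ReflTransGen (fun c d => c ∈ Q ∧ d ∈ Q ∧ AdjCell c d) u v →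
      Relation.ReflTransGen (fun c d => c ∈ insert g Q ∧ d ∈ insert g Q ∧ AdjCell c d) u v := by
    intro u v h
    exact Relation.ReflTransGen.mono
      (by intro c d hcd; exact ⟨Finset.mem_insert_of_mem hcd.1, Finset.mem_insert_of_mem hcd.2.1, hcd.2.2⟩) _ _ h
  have hgy : Relation.ReflTransGen
      (fun c d => c ∈ insert g Q ∧ d ∈ insert g Q ∧ AdjCell c d) g y :=
    Relation.ReflTransGen.single
      ⟨Finset.mem_insert_self _ _, Finset.mem_insert_of_mem hy, adjCell_symm hadj⟩
  have hsymm : Symmetric (fun c d : Cell => c ∈ insert g Q ∧ d ∈ insert g Q ∧ AdjCell c d) :=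
    fun c d hcd => ⟨hcd.2.1, hcd.1, adjCell_symm hcd.2.2⟩
  have hgx : ∀ x ∈ insert g Q, Relation.ReflTransGen
      (fun c d => c ∈ insert g Q ∧ d ∈ insert g Q ∧ AdjCell c d) g x := by
    intro x hx
    rcases Finset.mem_insert.mp hx with h | h
    · subst h; exact Relation.ReflTransGen.refl
    · exact hgy.trans (mono (hconn y hy x h))
  intro a ha b hb
  exact ((@Relation.ReflTransGen.stdSymm _ _ ⟨fun x y hxy => hsymm hxy⟩).symm _ _ (hgx a ha)).trans (hgx b hb)

lemma exits {r : Cell → Cell → Prop} {p : Cell → Prop} {a b : Cell}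
    (h : Relation.ReflTransGen r a b) (ha : p a) (hb : ¬ p b) :
    ∃ x y, r x y ∧ p x ∧ ¬ p y := by
  induction h using Relation.ReflTransGen.head_induction_on with
  | refl => exact absurd ha hb
  | head hac hcb ih =>
      rename_i a' c'
      by_cases hc : p c'
      · exact ih hc
      · exact ⟨a', c', hac, ha, hc⟩

lemma comp_disjoint {P P1 P2 : Finset Cell} (h1 : IsComponent P P1) (h2 : IsComponent P P2)
    (hne : P1 ≠ P2) : ∀ x, x ∈ P1 → x ∈ P2 → False := by
  have key : ∀ Q1 Q2 : Finset Cell, IsComponent P Q1 → IsComponent P Q2 →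
      ∀ x, x ∈ Q1 → x ∈ Q2 → ∀ c ∈ Q1, c ∉ Q2 → False := by
    intro Q1 Q2 hQ1 hQ2 x hx1 hx2 c hc1 hc2
    have hpath := hQ1.2.1.2 x hx1 c hc1
    obtain ⟨y, y', hr, hy, hy'⟩ := exits (p := fun z => z ∈ Q2) hpath hx2 hc2
    exact hQ2.2.2 y' (hQ1.1 hr.2.1) hy' (insert_poly hQ2.2.1 hy hr.2.2)
  intro x hx1 hx2
  rcases Finset.not_subset.mp (fun hsub : P1 ⊆ P2 => by
    rcases Finset.not_subset.mp (fun hsub' : P2 ⊆ P1 =>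
      hne (Finset.Subset.antisymm hsub hsub')) with ⟨c, hc2, hc1⟩
    exact key P2 P1 h2 h1 x hx2 hx1 c hc2 hc1) with ⟨c, hc1, hc2⟩
  exact key P1 P2 h1 h2 x hx1 hx2 c hc1 hc2

lemma comp_nonadj {P P1 P2 : Finset Cell} (h1 : IsComponent P P1) (h2 : IsComponent P P2)
    (hne : P1 ≠ P2) : ∀ c ∈ P1, ∀ d ∈ P2, ¬ AdjCell c d := by
  intro c hc d hd hadj
  have hd1 : d ∉ P1 := fun h => comp_disjoint h1 h2 hne d h hd
  exact h1.2.2 d (h2.1 hd) hd1 (insert_poly h1.2.1 hc hadj)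

lemma empty_between {P P1 P2 : Finset Cell} (h1 : IsComponent P P1) (h2 : IsComponent P P2)
    (hne : P1 ≠ P2) {c d g : Cell} (hc : c ∈ P1) (hd : d ∈ P2)
    (hgc : AdjCell g c) (hgd : AdjCell g d) : g ∉ P := by
  intro hgP
  by_cases hg1 : g ∈ P1
  · exact comp_nonadj h1 h2 hne g hg1 d hd hgd
  · exact h1.2.2 g hgP hg1 (insert_poly h1.2.1 hc (adjCell_symm hgc))

def DiagAt (a b : ℕ) (x y : Cell) : Prop :=
  ((x = ((a : ℕ), b) ∧ y = (a + 1, b + 1)) ∨ (x = (a + 1, b + 1) ∧ y = ((a : ℕ), b))) ∨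
    ((x = (a + 1, b) ∧ y = ((a : ℕ), b + 1)) ∨ (x = ((a : ℕ), b + 1) ∧ y = (a + 1, b)))

lemma diagAt_near {a b : ℕ} {x y : Cell} (h : DiagAt a b x y) : near x y := by
  rcases h with (⟨h1, h2⟩ | ⟨h1, h2⟩) | (⟨h1, h2⟩ | ⟨h1, h2⟩) <;> subst h1 <;> subst h2 <;>
    simp [near] <;> omega

lemma diagAt_corner {a b a' b' : ℕ} {x y : Cell} (h : DiagAt a b x y) (h' : DiagAt a' b' x y) :
    a = a' ∧ b = b' := by
  rcases h with (⟨h1, h2⟩ | ⟨h1, h2⟩) | (⟨h1, h2⟩ | ⟨h1, h2⟩) <;> subst h1 <;> subst h2 <;>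
    rcases h' with (⟨h1', h2'⟩ | ⟨h1', h2'⟩) | (⟨h1', h2'⟩ | ⟨h1', h2'⟩) <;>
    simp only [Prod.mk.injEq] at h1' h2' <;> omega

lemma shared_vertex {P1 P2 : Finset Cell} {v : Cell}
    (hd : ∀ x, x ∈ P1 → x ∈ P2 → False)
    (hadj : ∀ c ∈ P1, ∀ d ∈ P2, ¬ AdjCell c d)
    (hv1 : v ∈ verts P1) (hv2 : v ∈ verts P2) :
    ∃ a b c d, c ∈ P1 ∧ d ∈ P2 ∧ v = (a + 1, b + 1) ∧ DiagAt a b c d := by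
  obtain ⟨c, hc, hvc⟩ := Finset.mem_biUnion.mp hv1
  obtain ⟨d, hdP, hvd⟩ := Finset.mem_biUnion.mp hv2
  obtain ⟨c1, c2⟩ := c
  obtain ⟨d1, d2⟩ := d
  obtain ⟨v1, v2⟩ := v
  simp only [cellVerts, Finset.mem_insert, Finset.mem_singleton, Prod.mk.injEq] at hvc hvd
  have hne : ¬ (c1 = d1 ∧ c2 = d2) := by
    intro ⟨h1, h2⟩; subst h1; subst h2; exact hd _ hc hdP
  have hnadj : ¬ ((c1 = d1 ∧ (c2 + 1 = d2 ∨ d2 + 1 = c2)) ∨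
      (c2 = d2 ∧ (c1 + 1 = d1 ∨ d1 + 1 = c1))) := hadj _ hc _ hdP
  rcases hvc with ⟨e1, e2⟩ | ⟨e1, e2⟩ | ⟨e1, e2⟩ | ⟨e1, e2⟩ <;>
    rcases hvd with ⟨f1, f2⟩ | ⟨f1, f2⟩ | ⟨f1, f2⟩ | ⟨f1, f2⟩ <;>
    first
      | exact hne (by omega)
      | exact hnadj (by omega)
      | (refine ⟨c1, c2, (c1, c2), (d1, d2), hc, hdP, ?_, ?_⟩ <;>
            simp only [DiagAt, Prod.mk.injEq, and_true, true_and] <;> omega)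
      | (refine ⟨d1, d2, (c1, c2), (d1, d2), hc, hdP, ?_, ?_⟩ <;>
            simp only [DiagAt, Prod.mk.injEq, and_true, true_and] <;> omega)
      | (refine ⟨c1, d2, (c1, c2), (d1, d2), hc, hdP, ?_, ?_⟩ <;>
            simp only [DiagAt, Prod.mk.injEq, and_true, true_and] <;> omega)
      | (refine ⟨d1, c2, (c1, c2), (d1, d2), hc, hdP, ?_, ?_⟩ <;>
            simp only [DiagAt, Prod.mk.injEq, and_true, true_and] <;> omega)

lemma two_cancel (x y : ZMod 2) (h : x + y = 0) : x = y := by revert x y; decide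

lemma four_tele (x1 x2 x3 x4 : ZMod 2) :
    (x1 + x2) + (x2 + x3) + (x3 + x4) + (x4 + x1) = 0 := by revert x1 x2 x3 x4; decide

lemma parity_key (P : Finset Cell) (c1 d1 c2 d2 e f : Cell)
    (hc1P : c1 ∈ P) (hd1P : d1 ∈ P) (hc2P : c2 ∈ P) (hd2P : d2 ∈ P)
    (hj1 : near c2 d2) (hj2 : near d1 c1)
    (h1 : Relation.ReflTransGen (fun x y => x ∈ P ∧ y ∈ P ∧ near x y ∧ x ≠ d1 ∧ y ≠ d1) c1 c2)
    (h2 : Relation.ReflTransGen (fun x y => x ∈ P ∧ y ∈ P ∧ near x y ∧ x ≠ c1 ∧ y ≠ c1) d2 d1)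
    (h : Cell → ZMod 2) (δ : Cell → Cell → ZMod 2)
    (hδlem : ∀ z z', z ∈ P → z' ∈ P → near z z' →
      crossZ z z' e + crossZ z z' f = h z + h z' + δ z z')
    (hδ1 : ∀ z z', z ≠ d1 → z' ≠ d1 → δ z z' = 0)
    (hδ2 : ∀ z z', z ≠ c1 → z' ≠ c1 → δ z z' = 0)
    (hδj : δ c2 d2 = 0) (hδv : δ d1 c1 = 1)
    (he : e ∉ P) (hf : f ∉ P)
    (hpath : Relation.ReflTransGen (fun a b => a ∉ P ∧ b ∉ P ∧ AdjCell a b) e f) : False := by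
  obtain ⟨t1, ht1, hlast1⟩ := rtg_list h1
  obtain ⟨t2, ht2, hlast2⟩ := rtg_list h2
  set L : List (Cell × Cell) :=
    stepsL (c1 :: t1) ++ [(c2, d2)] ++ stepsL (d2 :: t2) ++ [(d1, c1)] with hL
  -- membership facts
  have hmem1 : ∀ x ∈ (c1 :: t1), True := fun _ _ => trivial
  have hLmem : ∀ s ∈ L, s.1 ∈ P ∧ s.2 ∈ P ∧ near s.1 s.2 := by
    intro s hs
    rcases List.mem_append.mp hs with hs | hs
    · rcases List.mem_append.mp hs with hs | hs
      · rcases List.mem_append.mp hs with hs | hs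
        · have := ht1 s hs; exact ⟨this.1, this.2.1, this.2.2.1⟩
        · rcases List.mem_singleton.mp hs with rfl
          exact ⟨hc2P, hd2P, hj1⟩
      · have := ht2 s hs; exact ⟨this.1, this.2.1, this.2.2.1⟩
    · rcases List.mem_singleton.mp hs with rfl
      exact ⟨hd1P, hc1P, hj2⟩
  -- telescoping over the closed loop
  have tele : ∀ g : Cell → ZMod 2, parS (fun x y => g x + g y) L = 0 := by
    intro g
    rw [hL, parS_append, parS_append, parS_append, stepsL_tele, stepsL_tele,
      parS_single, parS_single, hlast1, hlast2]
    exact four_tele (g c1) (g c2) (g d2) (g d1)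
  -- parity function
  set par : Cell → ZMod 2 := fun p => parS (fun z z' => crossZ z z' p) L with hpar
  -- parity invariant along complement steps
  have hstep : ∀ p q : Cell, p ∉ P → q ∉ P → AdjCell p q → par p = par q := by
    intro p q hp hq hadj
    have hnep : ∀ s ∈ L, s.1 ≠ p ∧ s.2 ≠ p ∧ s.1 ≠ q ∧ s.2 ≠ q := by
      intro s hs
      obtain ⟨h1, h2, _⟩ := hLmem s hs
      exact ⟨fun hh => hp (hh ▸ h1), fun hh => hp (hh ▸ h2),
        fun hh => hq (hh ▸ h1), fun hh => hq (hh ▸ h2)⟩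
    obtain ⟨p1, p2⟩ := p
    obtain ⟨q1, q2⟩ := q
    have hvert : ∀ a b : ℕ, ((a, b) : Cell) ∉ P → ((a, b + 1) : Cell) ∉ P →
        par (a, b) = par (a, b + 1) := by
      intro a b hab hab1
      apply parS_congr
      intro s hs
      obtain ⟨hz, hz', hn⟩ := hLmem s hs
      exact vert_step a b s.1 s.2 hn (fun hh => hab (hh ▸ hz)) (fun hh => hab (hh ▸ hz'))
        (fun hh => hab1 (hh ▸ hz)) (fun hh => hab1 (hh ▸ hz'))
    have hhoriz : ∀ a b : ℕ, ((a, b) : Cell) ∉ P → ((a + 1, b) : Cell) ∉ P →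
        par (a, b) = par (a + 1, b) := by
      intro a b hab hab1
      apply two_cancel
      have : par (a, b) + par (a + 1, b) =
          parS (fun z z' => crossZ z z' (a, b) + crossZ z z' (a + 1, b)) L := by
        rw [hpar]; rw [parS_add]
      rw [this]
      have : parS (fun z z' => crossZ z z' (a, b) + crossZ z z' (a + 1, b)) L =
          parS (fun z z' => (if z.1 = a + 1 ∧ z.2 < b then 1 else 0) +
            (if z'.1 = a + 1 ∧ z'.2 < b then 1 else 0)) L := by
        apply parS_congr
        intro s hs
        obtain ⟨hz, hz', hn⟩ := hLmem s hs
        exact horiz_step a b s.1 s.2 hn (fun hh => hab (hh ▸ hz)) (fun hh => hab (hh ▸ hz'))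
          (fun hh => hab1 (hh ▸ hz)) (fun hh => hab1 (hh ▸ hz'))
      rw [this]
      exact tele (fun u => if u.1 = a + 1 ∧ u.2 < b then 1 else 0)
    rcases hadj with ⟨hx, hy | hy⟩ | ⟨hx, hy | hy⟩
    · have h1 : q1 = p1 := hx.symm
      subst h1
      have h2 : q2 = p2 + 1 := hy.symm
      subst h2
      exact hvert q1 p2 hp hq
    · have h1 : q1 = p1 := hx.symm
      subst h1
      have h2 : p2 = q2 + 1 := hy.symm
      subst h2
      exact (hvert q1 q2 hq hp).symm
    · have h1 : q2 = p2 := hx.symm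
      subst h1
      have h2 : q1 = p1 + 1 := hy.symm
      subst h2
      exact hhoriz p1 q2 hp hq
    · have h1 : q2 = p2 := hx.symm
      subst h1
      have h2 : p1 = q1 + 1 := hy.symm
      subst h2
      exact (hhoriz q1 q2 hq hp).symm
  -- parity of e and f differ
  have hef : par e + par f = 1 := by
    have e1 : par e + par f = parS (fun z z' => crossZ z z' e + crossZ z z' f) L := by
      rw [hpar, parS_add]
    have e2 : parS (fun z z' => crossZ z z' e + crossZ z z' f) L =
        parS (fun z z' => (h z + h z') + δ z z') L := by
      apply parS_congr
      intro s hs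
      obtain ⟨hz, hz', hn⟩ := hLmem s hs
      exact hδlem s.1 s.2 hz hz' hn
    have e3 : parS (fun z z' => (h z + h z') + δ z z') L =
        parS (fun z z' => h z + h z') L + parS δ L := parS_add _ _ _
    have e4 : parS δ L = 1 := by
      rw [hL, parS_append, parS_append, parS_append, parS_single, parS_single]
      have z1 : parS δ (stepsL (c1 :: t1)) = 0 := by
        rw [show (0 : ZMod 2) = parS (fun _ _ => 0) (stepsL (c1 :: t1)) from (parS_zero _).symm]
        apply parS_congr
        intro s hs
        exact hδ1 s.1 s.2 (ht1 s hs).2.2.2.1 (ht1 s hs).2.2.2.2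
      have z2 : parS δ (stepsL (d2 :: t2)) = 0 := by
        rw [show (0 : ZMod 2) = parS (fun _ _ => 0) (stepsL (d2 :: t2)) from (parS_zero _).symm]
        apply parS_congr
        intro s hs
        exact hδ2 s.1 s.2 (ht2 s hs).2.2.2.1 (ht2 s hs).2.2.2.2
      rw [z1, z2, hδj, hδv]
      decide
    rw [e1, e2, e3, tele h, e4, zero_add]
  -- parity is constant along the complement path
  have heqef : par e = par f := by
    have gen : ∀ x y : Cell,
        Relation.ReflTransGen (fun a b => a ∉ P ∧ b ∉ P ∧ AdjCell a b) x y →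
        par x = par y := by
      intro x y hp
      induction hp with
      | refl => rfl
      | tail hab hbc ih => exact ih.trans (hstep _ _ hbc.1 hbc.2.1 hbc.2.2)
    exact gen e f hpath
  rw [heqef] at hef
  rw [add_self_two] at hef
  exact absurd hef (by decide)


lemma adj_near {x y : Cell} (h : AdjCell x y) : near x y := by
  obtain ⟨x1, x2⟩ := x; obtain ⟨y1, y2⟩ := y
  simp only [AdjCell, near] at *
  omega

lemma near_symm {x y : Cell} (h : near x y) : near y x := by
  obtain ⟨x1, x2⟩ := x; obtain ⟨y1, y2⟩ := y
  simp only [near] at *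
  omega

/-- In a simple collection of cells, two distinct connected components share at
most one vertex. -/
theorem stmt11 (P P1 P2 : Finset Cell) (hs : SimpleColl P)
    (h1 : IsComponent P P1) (h2 : IsComponent P P2) (hne : P1 ≠ P2) :
    (verts P1 ∩ verts P2).card ≤ 1 := by
  have hdisj : ∀ x, x ∈ P1 → x ∈ P2 → False := comp_disjoint h1 h2 hne
  have hnadj : ∀ c ∈ P1, ∀ d ∈ P2, ¬ AdjCell c d := comp_nonadj h1 h2 hne
  apply Finset.card_le_one.mpr
  intro v hv w hw
  by_contra hvw
  obtain ⟨hv1, hv2⟩ := Finset.mem_inter.mp hv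
  obtain ⟨hw1, hw2⟩ := Finset.mem_inter.mp hw
  obtain ⟨a, b, c1, d1, hc1, hd1, hveq, hdv⟩ := shared_vertex hdisj hnadj hv1 hv2
  obtain ⟨a', b', c2, d2, hc2, hd2, hweq, hdw⟩ := shared_vertex hdisj hnadj hw1 hw2
  have hne_ab : ¬ (a = a' ∧ b = b') := by
    intro ⟨u1, u2⟩
    exact hvw (by rw [hveq, hweq, u1, u2])
  have hgeom : ¬ (c2 = c1 ∧ d2 = d1) := by
    intro ⟨u1, u2⟩
    subst u1; subst u2
    exact hne_ab (diagAt_corner hdv hdw)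
  have hne_d1 : ∀ x, x ∈ P1 → x ≠ d1 := fun x hx hh => hdisj d1 (hh ▸ hx) hd1
  have hne_c1 : ∀ x, x ∈ P2 → x ≠ c1 := fun x hx hh => hdisj c1 hc1 (hh ▸ hx)
  have hr1 : Relation.ReflTransGen
      (fun x y => x ∈ P ∧ y ∈ P ∧ near x y ∧ x ≠ d1 ∧ y ≠ d1) c1 c2 :=
    Relation.ReflTransGen.mono
      (by intro x y hxy; exact ⟨h1.1 hxy.1, h1.1 hxy.2.1, adj_near hxy.2.2,
        hne_d1 x hxy.1, hne_d1 y hxy.2.1⟩) _ _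
      (h1.2.1.2 c1 hc1 c2 hc2)
  have hr2 : Relation.ReflTransGen
      (fun x y => x ∈ P ∧ y ∈ P ∧ near x y ∧ x ≠ c1 ∧ y ≠ c1) d2 d1 :=
    Relation.ReflTransGen.mono
      (by intro x y hxy; exact ⟨h2.1 hxy.1, h2.1 hxy.2.1, adj_near hxy.2.2,
        hne_c1 x hxy.1, hne_c1 y hxy.2.1⟩) _ _
      (h2.2.1.2 d2 hd2 d1 hd1)
  have hc1P : c1 ∈ P := h1.1 hc1
  have hd1P : d1 ∈ P := h2.1 hd1
  have hc2P : c2 ∈ P := h1.1 hc2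
  have hd2P : d2 ∈ P := h2.1 hd2
  have hj1 : near c2 d2 := diagAt_near hdw
  have hj2 : near d1 c1 := near_symm (diagAt_near hdv)
  -- the two empty cells at the corner v, and the parity contradiction
  rcases hdv with (⟨hA1, hA2⟩ | ⟨hA1, hA2⟩) | (⟨hA1, hA2⟩ | ⟨hA1, hA2⟩)
  -- Type A, c1 = (a,b), d1 = (a+1,b+1)
  · subst hA1; subst hA2
    have he : ((a + 1, b) : Cell) ∉ P :=
      empty_between h1 h2 hne hc1 hd1 (Or.inr ⟨rfl, Or.inr rfl⟩) (Or.inl ⟨rfl, Or.inl rfl⟩)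
    have hf : ((a, b + 1) : Cell) ∉ P :=
      empty_between h1 h2 hne hc1 hd1 (Or.inl ⟨rfl, Or.inr rfl⟩) (Or.inr ⟨rfl, Or.inl rfl⟩)
    refine parity_key P (a, b) (a + 1, b + 1) c2 d2 (a + 1, b) (a, b + 1)
      hc1P hd1P hc2P hd2P hj1 hj2 hr1 hr2
      (fun u => if u.1 = a + 1 ∧ u.2 ≤ b then 1 else 0)
      (fun z z' => if (z = ((a : ℕ), b) ∧ z' = (a + 1, b + 1)) ∨
        (z = (a + 1, b + 1) ∧ z' = ((a : ℕ), b)) then 1 else 0)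
      ?_ ?_ ?_ ?_ ?_ he hf (hs _ _ he hf)
    · intro z z' hz hz' hn
      exact deltaA a b z z' hn (fun hh => he (hh ▸ hz)) (fun hh => he (hh ▸ hz'))
        (fun hh => hf (hh ▸ hz)) (fun hh => hf (hh ▸ hz'))
    · intro z z' hzd hz'd
      exact if_neg (by rintro (⟨u1, u2⟩ | ⟨u1, u2⟩); exacts [hz'd u2, hzd u1])
    · intro z z' hzc hz'c
      exact if_neg (by rintro (⟨u1, u2⟩ | ⟨u1, u2⟩); exacts [hzc u1, hz'c u2])
    · refine if_neg ?_
      rintro (⟨u1, u2⟩ | ⟨u1, u2⟩)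
      · exact hgeom ⟨u1, u2⟩
      · exact hne_d1 c2 hc2 u1
    · exact if_pos (Or.inr ⟨rfl, rfl⟩)
  -- Type A, c1 = (a+1,b+1), d1 = (a,b)
  · subst hA1; subst hA2
    have he : ((a + 1, b) : Cell) ∉ P :=
      empty_between h1 h2 hne hc1 hd1 (Or.inl ⟨rfl, Or.inl rfl⟩) (Or.inr ⟨rfl, Or.inr rfl⟩)
    have hf : ((a, b + 1) : Cell) ∉ P :=
      empty_between h1 h2 hne hc1 hd1 (Or.inr ⟨rfl, Or.inl rfl⟩) (Or.inl ⟨rfl, Or.inr rfl⟩)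
    refine parity_key P (a + 1, b + 1) (a, b) c2 d2 (a + 1, b) (a, b + 1)
      hc1P hd1P hc2P hd2P hj1 hj2 hr1 hr2
      (fun u => if u.1 = a + 1 ∧ u.2 ≤ b then 1 else 0)
      (fun z z' => if (z = ((a : ℕ), b) ∧ z' = (a + 1, b + 1)) ∨
        (z = (a + 1, b + 1) ∧ z' = ((a : ℕ), b)) then 1 else 0)
      ?_ ?_ ?_ ?_ ?_ he hf (hs _ _ he hf)
    · intro z z' hz hz' hn
      exact deltaA a b z z' hn (fun hh => he (hh ▸ hz)) (fun hh => he (hh ▸ hz'))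
        (fun hh => hf (hh ▸ hz)) (fun hh => hf (hh ▸ hz'))
    · intro z z' hzd hz'd
      exact if_neg (by rintro (⟨u1, u2⟩ | ⟨u1, u2⟩); exacts [hzd u1, hz'd u2])
    · intro z z' hzc hz'c
      exact if_neg (by rintro (⟨u1, u2⟩ | ⟨u1, u2⟩); exacts [hz'c u2, hzc u1])
    · refine if_neg ?_
      rintro (⟨u1, u2⟩ | ⟨u1, u2⟩)
      · exact hne_d1 c2 hc2 u1
      · exact hgeom ⟨u1, u2⟩
    · exact if_pos (Or.inl ⟨rfl, rfl⟩)
  -- Type B, c1 = (a+1,b), d1 = (a,b+1)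
  · subst hA1; subst hA2
    have he : ((a, b) : Cell) ∉ P :=
      empty_between h1 h2 hne hc1 hd1 (Or.inr ⟨rfl, Or.inl rfl⟩) (Or.inl ⟨rfl, Or.inl rfl⟩)
    have hf : ((a + 1, b + 1) : Cell) ∉ P :=
      empty_between h1 h2 hne hc1 hd1 (Or.inl ⟨rfl, Or.inr rfl⟩) (Or.inr ⟨rfl, Or.inr rfl⟩)
    refine parity_key P (a + 1, b) (a, b + 1) c2 d2 (a, b) (a + 1, b + 1)
      hc1P hd1P hc2P hd2P hj1 hj2 hr1 hr2
      (fun u => if u.1 = a + 1 ∧ u.2 ≤ b then 1 else 0)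
      (fun z z' => if (z = ((a : ℕ), b + 1) ∧ z' = (a + 1, b)) ∨
        (z = (a + 1, b) ∧ z' = ((a : ℕ), b + 1)) then 1 else 0)
      ?_ ?_ ?_ ?_ ?_ he hf (hs _ _ he hf)
    · intro z z' hz hz' hn
      exact deltaB a b z z' hn (fun hh => he (hh ▸ hz)) (fun hh => he (hh ▸ hz'))
        (fun hh => hf (hh ▸ hz)) (fun hh => hf (hh ▸ hz'))
    · intro z z' hzd hz'd
      exact if_neg (by rintro (⟨u1, u2⟩ | ⟨u1, u2⟩); exacts [hzd u1, hz'd u2])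
    · intro z z' hzc hz'c
      exact if_neg (by rintro (⟨u1, u2⟩ | ⟨u1, u2⟩); exacts [hz'c u2, hzc u1])
    · refine if_neg ?_
      rintro (⟨u1, u2⟩ | ⟨u1, u2⟩)
      · exact hne_d1 c2 hc2 u1
      · exact hgeom ⟨u1, u2⟩
    · exact if_pos (Or.inl ⟨rfl, rfl⟩)
  -- Type B, c1 = (a,b+1), d1 = (a+1,b)
  · subst hA1; subst hA2
    have he : ((a, b) : Cell) ∉ P :=
      empty_between h1 h2 hne hc1 hd1 (Or.inl ⟨rfl, Or.inl rfl⟩) (Or.inr ⟨rfl, Or.inl rfl⟩)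
    have hf : ((a + 1, b + 1) : Cell) ∉ P :=
      empty_between h1 h2 hne hc1 hd1 (Or.inr ⟨rfl, Or.inr rfl⟩) (Or.inl ⟨rfl, Or.inr rfl⟩)
    refine parity_key P (a, b + 1) (a + 1, b) c2 d2 (a, b) (a + 1, b + 1)
      hc1P hd1P hc2P hd2P hj1 hj2 hr1 hr2
      (fun u => if u.1 = a + 1 ∧ u.2 ≤ b then 1 else 0)
      (fun z z' => if (z = ((a : ℕ), b + 1) ∧ z' = (a + 1, b)) ∨
        (z = (a + 1, b) ∧ z' = ((a : ℕ), b + 1)) then 1 else 0)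
      ?_ ?_ ?_ ?_ ?_ he hf (hs _ _ he hf)
    · intro z z' hz hz' hn
      exact deltaB a b z z' hn (fun hh => he (hh ▸ hz)) (fun hh => he (hh ▸ hz'))
        (fun hh => hf (hh ▸ hz)) (fun hh => hf (hh ▸ hz'))
    · intro z z' hzd hz'd
      exact if_neg (by rintro (⟨u1, u2⟩ | ⟨u1, u2⟩); exacts [hz'd u2, hzd u1])
    · intro z z' hzc hz'c
      exact if_neg (by rintro (⟨u1, u2⟩ | ⟨u1, u2⟩); exacts [hzc u1, hz'c u2])
    · refine if_neg ?_
      rintro (⟨u1, u2⟩ | ⟨u1, u2⟩)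
      · exact hgeom ⟨u1, u2⟩
      · exact hne_d1 c2 hc2 u1
    · exact if_pos (Or.inr ⟨rfl, rfl⟩)
end
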